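/- Let n_1, …, n_d be positive integers, let A and A' be arrangements of the n_1 × ⋯ × n_d matrix, and fix a coordinate t ∈ {1,…,d}. Suppose that for every line L in direction t (a set of cells agreeing in all coordinates except the t-th), the set of values that A' assigns to the cells of L equals the set of values that A assigns to the cells of L, and that the values of A' strictly increase along every line in direction t. Then spread(A') ≤ spread(A); that is, sorting the values within each line of one fixed coordinate to be increasing does not increase the spread in any coordinate. -/

import Mathlib

/-- Two cells of the `n 0 × ⋯ × n (d-1)` matrix lie in a common line:
they agree in all coordinates except (possibly) one. -/
def sameLine {d : ℕ} {n : Fin d → ℕ} (c c' : (i : Fin d) → Fin (n i)) : Prop :=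
  ∃ t : Fin d, ∀ s : Fin d, s ≠ t → c s = c' s

instance {d : ℕ} {n : Fin d → ℕ} (c c' : (i : Fin d) → Fin (n i)) :
    Decidable (sameLine c c') := by
  unfold sameLine; infer_instance

/-- The spread of an arrangement (= bijection from cells to `{0,…,∏ nᵢ − 1}`,
a zero-based version of `{1,…,∏ nᵢ}`): the maximum difference of values over
all pairs of cells lying in a common line. -/
def spread {d : ℕ} {n : Fin d → ℕ}
    (A : ((i : Fin d) → Fin (n i)) ≃ Fin (∏ i, n i)) : ℕ :=
  Finset.sup Finset.univ
    (fun p : ((i : Fin d) → Fin (n i)) × ((i : Fin d) → Fin (n i)) =>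
      if sameLine p.1 p.2 then Nat.dist (A p.1) (A p.2) else 0)

open Finset in
/-- The cardinality of a filter on a `t`-line equals the cardinality of the
corresponding filter on `Fin (n t)`. -/
lemma card_line_filter {d : ℕ} {n : Fin d → ℕ} (t : Fin d)
    (c : (i : Fin d) → Fin (n i)) (P : Fin (n t) → Prop) [DecidablePred P] :
    (univ.filter fun z : (i : Fin d) → Fin (n i) =>
        (∀ r, r ≠ t → z r = c r) ∧ P (z t)).card
      = (univ.filter P).card := by
  classical
  apply Finset.card_nbij' (fun z => z t) (fun k => Function.update c t k)
  · intro z hz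
    simp only [mem_coe, mem_filter, mem_univ, true_and] at hz ⊢
    exact hz.2
  · intro k hk
    simp only [mem_coe, mem_filter, mem_univ, true_and] at hk ⊢
    refine ⟨fun r hr => Function.update_of_ne hr _ _, ?_⟩
    rw [Function.update_self]; exact hk
  · intro z hz
    simp only [mem_coe, mem_filter, mem_univ, true_and] at hz
    funext r
    by_cases hr : r = t
    · subst hr; beta_reduce; rw [Function.update_self]
    · beta_reduce; rw [Function.update_of_ne hr, hz.1 r hr]
  · intro k _
    beta_reduce; rw [Function.update_self]

/-- Sorting the values within each line of one fixed coordinate `t` to be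
increasing does not increase the spread: if `A'` assigns to every line in
direction `t` the same set of values as `A`, and `A'` is strictly increasing
along every line in direction `t`, then `spread A' ≤ spread A`. -/
theorem spread_sorted_le (d : ℕ) (n : Fin d → ℕ) (hn : ∀ i, 0 < n i) (t : Fin d)
    (A A' : ((i : Fin d) → Fin (n i)) ≃ Fin (∏ i, n i))
    (hsame : ∀ c : (i : Fin d) → Fin (n i),
      (fun x => A' x) '' {c' | ∀ s : Fin d, s ≠ t → c' s = c s} =
      (fun x => A x) '' {c' | ∀ s : Fin d, s ≠ t → c' s = c s})
    (hmono : ∀ c c' : (i : Fin d) → Fin (n i),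
      (∀ s : Fin d, s ≠ t → c s = c' s) → c t < c' t → A' c < A' c') :
    spread A' ≤ spread A := by
  classical
  set S := spread A with hS
  -- distance bound for A on any common line
  have hdist : ∀ x y : (i : Fin d) → Fin (n i), sameLine x y →
      Nat.dist (A x) (A y) ≤ S := by
    intro x y hxy
    have := Finset.le_sup (f := fun p : ((i : Fin d) → Fin (n i)) × ((i : Fin d) → Fin (n i)) =>
      if sameLine p.1 p.2 then Nat.dist (A p.1) (A p.2) else 0) (Finset.mem_univ (x, y))
    simpa [hxy] using (show (if sameLine x y then Nat.dist (A x) (A y) else 0) ≤ S from this)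
  have hnatdist : ∀ a b : ℕ, a ≤ b + Nat.dist a b := by
    intro a b; simp [Nat.dist]; omega
  -- strict comparison characterization along t-lines
  have hcmp : ∀ z w : (i : Fin d) → Fin (n i), (∀ r, r ≠ t → z r = w r) →
      ((A' z : ℕ) < A' w ↔ z t < w t) := by
    intro z w hzw
    constructor
    · intro hlt
      rcases lt_trichotomy (z t) (w t) with h | h | h
      · exact h
      · exfalso
        have : z = w := funext fun r => by
          by_cases hr : r = t
          · subst hr; exact h
          · exact hzw r hr
        subst this; exact lt_irrefl _ hlt
      · exfalso
        have h2 := hmono w z (fun r hr => (hzw r hr).symm) h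
        have : ((A' w : ℕ)) < (A' z : ℕ) := h2
        omega
    · intro h; exact hmono z w hzw h
  -- key one-sided inequality for cells differing in a coordinate s ≠ t
  have key : ∀ c c' : (i : Fin d) → Fin (n i), ∀ s : Fin d, s ≠ t →
      (∀ r, r ≠ s → c r = c' r) → (A' c : ℕ) ≤ (A' c' : ℕ) + S := by
    intro c c' s hst h
    by_contra hcon
    push_neg at hcon
    have htt : c t = c' t := h t (Ne.symm hst)
    set W : Finset ((i : Fin d) → Fin (n i)) :=
      Finset.univ.filter (fun y => (∀ r, r ≠ t → y r = c' r) ∧ (A y : ℕ) ≤ (A' c' : ℕ)) with hW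
    set V : Finset ((i : Fin d) → Fin (n i)) :=
      Finset.univ.filter (fun z => (∀ r, r ≠ t → z r = c r) ∧ (A' z : ℕ) < (A' c : ℕ)) with hV
    -- card V = c t
    have hVcard : V.card = (c t : ℕ) := by
      have hVeq : V = Finset.univ.filter
          (fun z => (∀ r, r ≠ t → z r = c r) ∧ z t < c t) := by
        ext z
        simp only [hV, Finset.mem_filter, Finset.mem_univ, true_and]
        constructor
        · rintro ⟨hl, hlt⟩
          exact ⟨hl, (hcmp z c hl).mp hlt⟩
        · rintro ⟨hl, hlt⟩
          exact ⟨hl, (hcmp z c hl).mpr hlt⟩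
      rw [hVeq, card_line_filter t c (fun k => k < c t)]
      have hio : Finset.univ.filter (fun k : Fin (n t) => k < c t) = Finset.Iio (c t) := by
        ext k; simp
      rw [hio, Fin.card_Iio]
    -- card W = c' t + 1
    have hWcard : W.card = (c' t : ℕ) + 1 := by
      have hb : W.card = (Finset.univ.filter
          (fun z => (∀ r, r ≠ t → z r = c' r) ∧ (A' z : ℕ) ≤ (A' c' : ℕ))).card := by
        apply Finset.card_nbij' (fun y => A'.symm (A y)) (fun z => A.symm (A' z))
        · intro y hy
          simp only [hW, Finset.mem_coe, Finset.mem_filter, Finset.mem_univ, true_and] at hy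
          obtain ⟨hl, hle⟩ := hy
          have hmem : A y ∈ (fun x => A' x) '' {x | ∀ r, r ≠ t → x r = c' r} := by
            rw [hsame c']; exact ⟨y, hl, rfl⟩
          obtain ⟨z, hz, hz2⟩ := hmem
          have hz2' : A' z = A y := hz2
          have hzz : A'.symm (A y) = z := by rw [← hz2']; exact A'.symm_apply_apply z
          beta_reduce; rw [hzz]
          simp only [Finset.mem_coe, Finset.mem_filter, Finset.mem_univ, true_and]
          exact ⟨hz, by rw [hz2']; exact hle⟩
        · intro z hz
          simp only [Finset.mem_coe, Finset.mem_filter, Finset.mem_univ, true_and] at hz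
          obtain ⟨hl, hle⟩ := hz
          have hmem : A' z ∈ (fun x => A x) '' {x | ∀ r, r ≠ t → x r = c' r} := by
            rw [← hsame c']; exact ⟨z, hl, rfl⟩
          obtain ⟨y, hy, hy2⟩ := hmem
          have hy2' : A y = A' z := hy2
          have hyy : A.symm (A' z) = y := by rw [← hy2']; exact A.symm_apply_apply y
          beta_reduce; rw [hyy]
          simp only [hW, Finset.mem_coe, Finset.mem_filter, Finset.mem_univ, true_and]
          exact ⟨hy, by rw [hy2']; exact hle⟩
        · intro y _; simp
        · intro z _; simp
      have heq : Finset.univ.filter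
          (fun z : (i : Fin d) → Fin (n i) =>
            (∀ r, r ≠ t → z r = c' r) ∧ (A' z : ℕ) ≤ (A' c' : ℕ))
          = Finset.univ.filter
          (fun z => (∀ r, r ≠ t → z r = c' r) ∧ z t ≤ c' t) := by
        ext z
        simp only [Finset.mem_filter, Finset.mem_univ, true_and]
        constructor
        · rintro ⟨hl, hle⟩
          refine ⟨hl, ?_⟩
          rcases le_or_gt (z t) (c' t) with h' | h'
          · exact h'
          · exact absurd hle (not_le.mpr ((hcmp c' z (fun r hr => (hl r hr).symm)).mpr h'))
        · rintro ⟨hl, hle⟩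
          refine ⟨hl, ?_⟩
          rcases lt_or_eq_of_le hle with hlt | heq2
          · exact le_of_lt ((hcmp z c' hl).mpr hlt)
          · have : z = c' := funext fun r => by
              by_cases hr : r = t
              · subst hr; exact heq2
              · exact hl r hr
            subst this; exact le_refl _
      rw [hb, heq, card_line_filter t c' (fun k => k ≤ c' t)]
      have hic : Finset.univ.filter (fun k : Fin (n t) => k ≤ c' t) = Finset.Iic (c' t) := by
        ext k; simp
      rw [hic, Fin.card_Iic]
    -- injection from W into V
    have hinj : W.card ≤ V.card := by
      apply Finset.card_le_card_of_injOn
        (fun y => A'.symm (A (Function.update y s (c s))))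
      · intro y hy
        simp only [hW, Finset.mem_coe, Finset.mem_filter, Finset.mem_univ, true_and] at hy
        obtain ⟨hl, hle⟩ := hy
        set y' := Function.update y s (c s) with hy'
        have hy'mem : ∀ r, r ≠ t → y' r = c r := by
          intro r hr
          by_cases hrs : r = s
          · subst hrs; rw [hy', Function.update_self]
          · rw [hy', Function.update_of_ne hrs, hl r hr, ← h r hrs]
        have hline : sameLine y' y := ⟨s, fun r hr => Function.update_of_ne hr _ _⟩
        have hd : Nat.dist (A y') (A y) ≤ S := hdist y' y hline
        have hbound : (A y' : ℕ) < (A' c : ℕ) := by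
          have h1 : (A y' : ℕ) ≤ (A y : ℕ) + Nat.dist (A y') (A y) := hnatdist _ _
          omega
        have hmem : A y' ∈ (fun x => A' x) '' {x | ∀ r, r ≠ t → x r = c r} := by
          rw [hsame c]; exact ⟨y', hy'mem, rfl⟩
        obtain ⟨z, hz, hz2⟩ := hmem
        have hz2' : A' z = A y' := hz2
        have hzz : A'.symm (A y') = z := by rw [← hz2']; exact A'.symm_apply_apply z
        simp only [hV, Finset.mem_coe, Finset.mem_filter, Finset.mem_univ, true_and]
        rw [hzz]
        exact ⟨hz, by rw [hz2']; exact hbound⟩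
      · intro y1 hy1 y2 hy2 heq
        simp only [hW, Finset.coe_filter, Set.mem_setOf_eq, Finset.mem_univ, true_and]
          at hy1 hy2
        have h1 : A (Function.update y1 s (c s)) = A (Function.update y2 s (c s)) :=
          A'.symm.injective heq
        have h2 : Function.update y1 s (c s) = Function.update y2 s (c s) :=
          A.injective h1
        funext r
        by_cases hrs : r = s
        · subst hrs
          rw [hy1.1 r hst, hy2.1 r hst]
        · have := congrFun h2 r
          rwa [Function.update_of_ne hrs, Function.update_of_ne hrs] at this
    rw [hWcard, hVcard] at hinj
    have : (c t : ℕ) = (c' t : ℕ) := by rw [htt]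
    omega
  -- conclude
  apply Finset.sup_le
  rintro ⟨c, c'⟩ -
  by_cases hl : sameLine c c'
  · rw [if_pos hl]
    obtain ⟨s, hs⟩ := hl
    by_cases hst : s = t
    · -- same t-line: use the value-set equality
      subst hst
      have hc : A' c ∈ (fun x => A' x) '' {x | ∀ r, r ≠ s → x r = c r} :=
        ⟨c, fun r _ => rfl, rfl⟩
      have hc' : A' c' ∈ (fun x => A' x) '' {x | ∀ r, r ≠ s → x r = c r} :=
        ⟨c', fun r hr => (hs r hr).symm, rfl⟩
      rw [hsame c] at hc hc'
      obtain ⟨x, hx, hx2⟩ := hc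
      obtain ⟨y, hy, hy2⟩ := hc'
      have hxy : sameLine x y := ⟨s, fun r hr => (hx r hr).trans (hy r hr).symm⟩
      have hx2' : A x = A' c := hx2
      have hy2' : A y = A' c' := hy2
      have hxv : (A x : ℕ) = (A' c : ℕ) := by rw [hx2']
      have hyv : (A y : ℕ) = (A' c' : ℕ) := by rw [hy2']
      calc Nat.dist (A' c) (A' c') = Nat.dist (A x) (A y) := by rw [hxv, hyv]
        _ ≤ S := hdist x y hxy
    · -- different direction: use the counting bound both ways
      have h1 := key c c' s hst hs
      have h2 := key c' c s hst (fun r hr => (hs r hr).symm)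
      simp only [Nat.dist]
      omega
  · rw [if_neg hl]
    exact Nat.zero_le _
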